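/- Let X = (X_1,…,X_d) be a random vector on a probability space such that each X_i is square-integrable. If X is positive upper orthant dependent, then X is positively correlated: Cov(X_i, X_j) ≥ 0 for all i, j ∈ {1,…,d}. -/

import Mathlib

open MeasureTheory Filter Set Topology

namespace PUODAux

noncomputable def ind (s x : ℝ) : ℝ := if s < x then 1 else 0

lemma ind_nonneg (s x : ℝ) : 0 ≤ ind s x := by unfold ind; split <;> norm_num

lemma ind_le_one (s x : ℝ) : ind s x ≤ 1 := by unfold ind; split <;> norm_num

lemma abs_ind_sub_le (s a b : ℝ) : |ind s a - ind s b| ≤ 1 := by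
  have h1 := ind_nonneg s a; have h2 := ind_le_one s a
  have h3 := ind_nonneg s b; have h4 := ind_le_one s b
  rw [abs_le]; constructor <;> linarith

lemma meas_ind_comp {γ : Type*} [MeasurableSpace γ] (u v : γ → ℝ) (hu : Measurable u)
    (hv : Measurable v) : Measurable (fun c => ind (u c) (v c)) := by
  unfold ind
  exact Measurable.ite (measurableSet_lt hu hv) measurable_const measurable_const

lemma integrable_of_bdd {α : Type*} [MeasurableSpace α] {μ : Measure α} [IsFiniteMeasure μ]
    {f : α → ℝ} (hf : Measurable f) {C : ℝ} (hC : ∀ x, |f x| ≤ C) : Integrable f μ :=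
  Integrable.mono' (integrable_const C) hf.aestronglyMeasurable (ae_of_all _ fun x => by
    simpa [Real.norm_eq_abs] using hC x)

noncomputable def trunc (n : ℕ) (x : ℝ) : ℝ := max (-(n : ℝ)) (min (n : ℝ) x)

lemma measurable_trunc (n : ℕ) : Measurable (trunc n) :=
  measurable_const.max (measurable_const.min measurable_id)

lemma abs_trunc_le_abs (n : ℕ) (x : ℝ) : |trunc n x| ≤ |x| := by
  have hn : (0:ℝ) ≤ n := Nat.cast_nonneg n
  rw [abs_le]
  unfold trunc
  constructor
  · rcases le_or_gt 0 x with h | h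
    · have h1 : (0:ℝ) ≤ min (n:ℝ) x := le_min hn h
      have h2 := le_max_right (-(n:ℝ)) (min (n:ℝ) x)
      rw [abs_of_nonneg h]; linarith
    · rw [abs_of_neg h]
      have h1 : min (n:ℝ) x = x := min_eq_right (by linarith)
      rw [h1, neg_neg]; exact le_max_right _ _
  · refine max_le (by linarith [abs_nonneg x]) ?_
    exact (min_le_right _ _).trans (le_abs_self x)

lemma abs_trunc_le (n : ℕ) (x : ℝ) : |trunc n x| ≤ n := by
  have hn : (0:ℝ) ≤ n := Nat.cast_nonneg n
  rw [abs_le]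
  exact ⟨le_max_left _ _, max_le (by linarith) (min_le_left _ _)⟩

lemma tendsto_trunc (x : ℝ) : Tendsto (fun n => trunc n x) atTop (𝓝 x) := by
  refine Tendsto.congr' ?_ (tendsto_const_nhds (x := x))
  filter_upwards [eventually_ge_atTop ⌈|x|⌉₊] with n hn
  have h : |x| ≤ (n:ℝ) := (Nat.le_ceil _).trans (Nat.cast_le.2 hn)
  unfold trunc
  rw [min_eq_right ((le_abs_self x).trans h), max_eq_right (by linarith [neg_abs_le x])]

lemma integrableOn_ind (n : ℕ) (x : ℝ) :
    Integrable (fun s => ind s x) (volume.restrict (Ioc (-(n:ℝ)) n)) := by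
  haveI : IsFiniteMeasure (volume.restrict (Ioc (-(n:ℝ)) n)) :=
    ⟨by rw [Measure.restrict_apply_univ]; exact measure_Ioc_lt_top⟩
  exact integrable_of_bdd (C := 1) (meas_ind_comp id (fun _ => x) measurable_id measurable_const)
    (fun s => by
      have h1 := ind_nonneg s x; have h2 := ind_le_one s x
      rw [abs_le]; constructor <;> linarith)

lemma integral_ind (n : ℕ) (x : ℝ) :
    ∫ s in Ioc (-(n:ℝ)) n, ind s x = trunc n x + n := by
  have h1 : (fun s => ind s x) = Set.indicator (Iio x) (fun _ => (1:ℝ)) := by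
    ext s; simp [ind, indicator, mem_Iio]
  have hn : (0:ℝ) ≤ n := Nat.cast_nonneg n
  rw [h1, setIntegral_indicator measurableSet_Iio, setIntegral_const]
  rcases le_or_gt x (-(n:ℝ)) with h | h
  · have hset : Ioc (-(n:ℝ)) n ∩ Iio x = ∅ := by
      ext s; simp only [mem_inter_iff, mem_Ioc, mem_Iio, mem_empty_iff_false, iff_false, not_and]
      rintro ⟨h1', _⟩ h2'; linarith
    have htr : trunc n x = -(n:ℝ) := by
      unfold trunc
      rw [min_eq_right (h.trans (by linarith)), max_eq_left h]
    rw [hset, htr]; simp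
  · rcases le_or_gt x n with h2 | h2
    · have hset : Ioc (-(n:ℝ)) n ∩ Iio x = Ioo (-(n:ℝ)) x := by
        ext s; simp only [mem_inter_iff, mem_Ioc, mem_Iio, mem_Ioo]
        exact ⟨fun hh => ⟨hh.1.1, hh.2⟩, fun hh => ⟨⟨hh.1, hh.2.le.trans h2⟩, hh.2⟩⟩
      have htr : trunc n x = x := by
        unfold trunc; rw [min_eq_right h2, max_eq_right h.le]
      rw [hset, htr, measureReal_def, Real.volume_Ioo, ENNReal.toReal_ofReal (by linarith)]
      rw [smul_eq_mul, mul_one]; ring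
    · have hset : Ioc (-(n:ℝ)) n ∩ Iio x = Ioc (-(n:ℝ)) n :=
        inter_eq_left.2 (fun s hs => lt_of_le_of_lt hs.2 h2)
      have htr : trunc n x = n := by
        unfold trunc; rw [min_eq_left h2.le, max_eq_right (by linarith)]
      rw [hset, htr, measureReal_def, Real.volume_Ioc, ENNReal.toReal_ofReal (by linarith)]
      rw [smul_eq_mul, mul_one]; ring

lemma integral_ind_sub (n : ℕ) (a b : ℝ) :
    ∫ s in Ioc (-(n:ℝ)) n, (ind s a - ind s b) = trunc n a - trunc n b := by
  rw [integral_sub (integrableOn_ind n a) (integrableOn_ind n b), integral_ind, integral_ind]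
  ring



lemma hoeffding_expand {Ω : Type*} [MeasurableSpace Ω] (P : Measure Ω) [IsProbabilityMeasure P]
    (φ ψ : Ω → ℝ) (hφ : Measurable φ) (hψ : Measurable ψ) (C : ℝ)
    (hφb : ∀ ω, |φ ω| ≤ C) (hψb : ∀ ω, |ψ ω| ≤ C) :
    ∫ z : Ω × Ω, (φ z.1 - φ z.2) * (ψ z.1 - ψ z.2) ∂(P.prod P)
      = 2 * ((∫ ω, φ ω * ψ ω ∂P) - (∫ ω, φ ω ∂P) * (∫ ω, ψ ω ∂P)) := by
  have i1 : Integrable (fun z : Ω × Ω => φ z.1 * ψ z.1) (P.prod P) :=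
    integrable_of_bdd ((hφ.comp measurable_fst).mul (hψ.comp measurable_fst))
      (C := C * C) (fun z => by
        rw [abs_mul]
        exact mul_le_mul (hφb _) (hψb _) (abs_nonneg _) ((abs_nonneg _).trans (hφb z.1)))
  have i2 : Integrable (fun z : Ω × Ω => φ z.1 * ψ z.2) (P.prod P) :=
    integrable_of_bdd ((hφ.comp measurable_fst).mul (hψ.comp measurable_snd))
      (C := C * C) (fun z => by
        rw [abs_mul]
        exact mul_le_mul (hφb _) (hψb _) (abs_nonneg _) ((abs_nonneg _).trans (hφb z.1)))
  have i3 : Integrable (fun z : Ω × Ω => φ z.2 * ψ z.1) (P.prod P) :=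
    integrable_of_bdd ((hφ.comp measurable_snd).mul (hψ.comp measurable_fst))
      (C := C * C) (fun z => by
        rw [abs_mul]
        exact mul_le_mul (hφb _) (hψb _) (abs_nonneg _) ((abs_nonneg _).trans (hφb z.2)))
  have i4 : Integrable (fun z : Ω × Ω => φ z.2 * ψ z.2) (P.prod P) :=
    integrable_of_bdd ((hφ.comp measurable_snd).mul (hψ.comp measurable_snd))
      (C := C * C) (fun z => by
        rw [abs_mul]
        exact mul_le_mul (hφb _) (hψb _) (abs_nonneg _) ((abs_nonneg _).trans (hφb z.2)))
  have hpt : (fun z : Ω × Ω => (φ z.1 - φ z.2) * (ψ z.1 - ψ z.2))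
      = fun z : Ω × Ω => φ z.1 * ψ z.1 - φ z.1 * ψ z.2 - φ z.2 * ψ z.1 + φ z.2 * ψ z.2 :=
    funext fun z => by ring
  have i12 : Integrable (fun z : Ω × Ω => φ z.1 * ψ z.1 - φ z.1 * ψ z.2) (P.prod P) := i1.sub i2
  have i123 : Integrable
      (fun z : Ω × Ω => φ z.1 * ψ z.1 - φ z.1 * ψ z.2 - φ z.2 * ψ z.1) (P.prod P) := i12.sub i3
  rw [hpt, integral_add i123 i4, integral_sub i12 i3, integral_sub i1 i2]
  have e1 : ∫ z : Ω × Ω, φ z.1 * ψ z.1 ∂(P.prod P) = ∫ ω, φ ω * ψ ω ∂P := by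
    simpa using integral_fun_fst (μ := P) (ν := P) (f := fun ω => φ ω * ψ ω)
  have e4 : ∫ z : Ω × Ω, φ z.2 * ψ z.2 ∂(P.prod P) = ∫ ω, φ ω * ψ ω ∂P := by
    simpa using integral_fun_snd (μ := P) (ν := P) (f := fun ω => φ ω * ψ ω)
  have e2 : ∫ z : Ω × Ω, φ z.1 * ψ z.2 ∂(P.prod P) = (∫ ω, φ ω ∂P) * (∫ ω, ψ ω ∂P) :=
    integral_prod_mul φ ψ
  have e3 : ∫ z : Ω × Ω, φ z.2 * ψ z.1 ∂(P.prod P) = (∫ ω, φ ω ∂P) * (∫ ω, ψ ω ∂P) := by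
    have h : (fun z : Ω × Ω => φ z.2 * ψ z.1) = fun z : Ω × Ω => ψ z.1 * φ z.2 :=
      funext fun z => mul_comm _ _
    rw [h, integral_prod_mul ψ φ]; ring
  rw [e1, e2, e3, e4]; ring


end PUODAux

/-- If each component of `X` is square-integrable and `X` is positive upper
orthant dependent, then `X` is positively correlated: `Cov(Xᵢ, Xⱼ) ≥ 0` for all `i, j`. -/
theorem PUOD_implies_positively_correlated
    {Ω : Type*} [MeasurableSpace Ω] (P : Measure Ω) [IsProbabilityMeasure P]
    (d : ℕ) (X : Fin d → Ω → ℝ) (hX : ∀ i, Measurable (X i))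
    (hL2 : ∀ i, MemLp (X i) 2 P)
    (PUOD : ∀ t : Fin d → ℝ, ∏ i, P {ω | t i < X i ω} ≤ P {ω | ∀ i, t i < X i ω}) :
    ∀ i j : Fin d,
      0 ≤ (∫ ω, X i ω * X j ω ∂P) - (∫ ω, X i ω ∂P) * (∫ ω, X j ω ∂P) := by
  classical
  intro i j
  have hAs : ∀ (k : Fin d) (s : ℝ), MeasurableSet {ω | s < X k ω} :=
    fun k s => hX k measurableSet_Ioi
  have toReal_le_one : ∀ A : Set Ω, (P A).toReal ≤ 1 := fun A => by
    simpa using ENNReal.toReal_mono (by simp) (prob_le_one (μ := P) (s := A))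
  -- Pairwise PUOD, real-valued form
  have pair : ∀ s t : ℝ,
      (P {ω | s < X i ω}).toReal * (P {ω | t < X j ω}).toReal
        ≤ (P {ω | s < X i ω ∧ t < X j ω}).toReal := by
    intro s t
    by_cases hij : i = j
    · subst hij
      rcases le_total s t with hst | hst
      · have hsub : {ω | s < X i ω ∧ t < X i ω} = {ω | t < X i ω} := by
          ext ω; exact ⟨fun h => h.2, fun h => ⟨lt_of_le_of_lt hst h, h⟩⟩
        rw [hsub]
        calc (P {ω | s < X i ω}).toReal * (P {ω | t < X i ω}).toReal
            ≤ 1 * (P {ω | t < X i ω}).toReal :=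
              mul_le_mul_of_nonneg_right (toReal_le_one _) ENNReal.toReal_nonneg
          _ = _ := one_mul _
      · have hsub : {ω | s < X i ω ∧ t < X i ω} = {ω | s < X i ω} := by
          ext ω; exact ⟨fun h => h.1, fun h => ⟨h, lt_of_le_of_lt hst h⟩⟩
        rw [hsub]
        calc (P {ω | s < X i ω}).toReal * (P {ω | t < X i ω}).toReal
            ≤ (P {ω | s < X i ω}).toReal * 1 :=
              mul_le_mul_of_nonneg_left (toReal_le_one _) ENNReal.toReal_nonneg
          _ = _ := mul_one _
    · have hji : j ≠ i := fun h => hij h.symm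
      set τ : ℕ → Fin d → ℝ := fun n k => if k = i then s else if k = j then t else -(n:ℝ)
        with hτ
      have key : ∀ n : ℕ,
          ∏ k, (P {ω | τ n k < X k ω}).toReal ≤ (P {ω | s < X i ω ∧ t < X j ω}).toReal := by
        intro n
        have h1 := PUOD (τ n)
        have h2 : P {ω | ∀ k, τ n k < X k ω} ≤ P {ω | s < X i ω ∧ t < X j ω} := by
          apply measure_mono
          intro ω hω
          constructor
          · have := hω i; simpa [hτ] using this
          · have := hω j; simpa [hτ, hji] using this
        calc ∏ k, (P {ω | τ n k < X k ω}).toReal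
            = (∏ k, P {ω | τ n k < X k ω}).toReal := (ENNReal.toReal_prod _ _).symm
          _ ≤ _ := ENNReal.toReal_mono (measure_ne_top _ _) (h1.trans h2)
      have hlim : Tendsto (fun n => ∏ k, (P {ω | τ n k < X k ω}).toReal) atTop
          (𝓝 (∏ k : Fin d, (if k = i then (P {ω | s < X i ω}).toReal else
              if k = j then (P {ω | t < X j ω}).toReal else 1))) := by
        apply tendsto_finset_prod
        intro k _
        by_cases hk : k = i
        · subst hk
          simp only [hτ, if_pos rfl]
          exact tendsto_const_nhds
        · by_cases hk2 : k = j
          · subst hk2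
            simp only [hτ, if_neg hk, if_pos rfl]
            exact tendsto_const_nhds
          · simp only [hτ, if_neg hk, if_neg hk2]
            have hmono : Monotone (fun n : ℕ => {ω | -(n:ℝ) < X k ω}) := by
              intro m m' hmm' ω hω
              simp only [mem_setOf_eq] at *
              have h : (m:ℝ) ≤ (m':ℝ) := Nat.cast_le.2 hmm'
              linarith
            have hunion : (⋃ n : ℕ, {ω | -(n:ℝ) < X k ω}) = univ := by
              ext ω; simp only [mem_iUnion, mem_setOf_eq, mem_univ, iff_true]
              obtain ⟨n, hn⟩ := exists_nat_gt (-(X k ω))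
              exact ⟨n, by linarith⟩
            have ht := tendsto_measure_iUnion_atTop (μ := P) hmono
            rw [hunion, measure_univ] at ht
            have h2 := (ENNReal.tendsto_toReal (by simp)).comp ht
            simpa [Function.comp_def] using h2
      have hprodval : (∏ k : Fin d, (if k = i then (P {ω | s < X i ω}).toReal else
            if k = j then (P {ω | t < X j ω}).toReal else 1))
          = (P {ω | s < X i ω}).toReal * (P {ω | t < X j ω}).toReal := by
        have hre : ∀ k : Fin d, (if k = i then (P {ω | s < X i ω}).toReal else
              if k = j then (P {ω | t < X j ω}).toReal else 1)
            = (if k = i then (P {ω | s < X i ω}).toReal else 1) *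
              (if k = j then (P {ω | t < X j ω}).toReal else 1) := by
          intro k
          by_cases hk : k = i
          · subst hk; simp [hij]
          · by_cases hk2 : k = j
            · subst hk2; simp [hk]
            · simp [hk, hk2]
        rw [Finset.prod_congr rfl (fun k _ => hre k), Finset.prod_mul_distrib]
        simp [Finset.prod_ite_eq']
      rw [hprodval] at hlim
      exact le_of_tendsto' hlim key
  -- basic integrability
  have hXint : ∀ k, Integrable (X k) P := fun k => (hL2 k).integrable one_le_two
  have hFGint : Integrable (fun ω => X i ω * X j ω) P := by
    have h1 : Integrable (fun ω => (X i ω + X j ω) ^ 2) P := ((hL2 i).add (hL2 j)).integrable_sq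
    have h2 : Integrable (fun ω => X i ω ^ 2) P := (hL2 i).integrable_sq
    have h3 : Integrable (fun ω => X j ω ^ 2) P := (hL2 j).integrable_sq
    have he : (fun ω => X i ω * X j ω)
        = fun ω => ((X i ω + X j ω) ^ 2 - X i ω ^ 2 - X j ω ^ 2) / 2 := by ext ω; ring
    rw [he]; exact ((h1.sub h2).sub h3).div_const 2
  -- integrals of indicators
  have int_ind : ∀ (k : Fin d) (s : ℝ),
      ∫ ω, PUODAux.ind s (X k ω) ∂P = (P {ω | s < X k ω}).toReal := by
    intro k s
    have he : (fun ω => PUODAux.ind s (X k ω))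
        = Set.indicator {ω | s < X k ω} (fun _ => (1:ℝ)) := by
      ext ω; simp [PUODAux.ind, Set.indicator, Set.mem_setOf_eq]
    rw [he, integral_indicator_const _ (hAs k s)]
    simp; rfl
  have int_ind2 : ∀ s t : ℝ,
      ∫ ω, PUODAux.ind s (X i ω) * PUODAux.ind t (X j ω) ∂P
        = (P {ω | s < X i ω ∧ t < X j ω}).toReal := by
    intro s t
    have he : (fun ω => PUODAux.ind s (X i ω) * PUODAux.ind t (X j ω))
        = Set.indicator {ω | s < X i ω ∧ t < X j ω} (fun _ => (1:ℝ)) := by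
      ext ω
      by_cases h1 : s < X i ω <;> by_cases h2 : t < X j ω <;>
        simp [PUODAux.ind, Set.indicator, Set.mem_setOf_eq, h1, h2]
    rw [he, integral_indicator_const _ (show MeasurableSet {ω | s < X i ω ∧ t < X j ω} from
      (hAs i s).inter (hAs j t))]
    simp; rfl
  -- the key nonnegativity statement for truncations
  have step : ∀ n : ℕ,
      0 ≤ (∫ ω, PUODAux.trunc n (X i ω) * PUODAux.trunc n (X j ω) ∂P)
          - (∫ ω, PUODAux.trunc n (X i ω) ∂P) * (∫ ω, PUODAux.trunc n (X j ω) ∂P) := by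
    intro n
    haveI hfinI : IsFiniteMeasure (volume.restrict (Ioc (-(n:ℝ)) n)) :=
      ⟨by rw [Measure.restrict_apply_univ]; exact measure_Ioc_lt_top⟩
    have hAm : Measurable (fun ω => PUODAux.trunc n (X i ω)) :=
      (PUODAux.measurable_trunc n).comp (hX i)
    have hBm : Measurable (fun ω => PUODAux.trunc n (X j ω)) :=
      (PUODAux.measurable_trunc n).comp (hX j)
    have hCn : (∫ z : Ω × Ω, (PUODAux.trunc n (X i z.1) - PUODAux.trunc n (X i z.2)) *
          (PUODAux.trunc n (X j z.1) - PUODAux.trunc n (X j z.2)) ∂(P.prod P))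
        = 2 * ((∫ ω, PUODAux.trunc n (X i ω) * PUODAux.trunc n (X j ω) ∂P)
          - (∫ ω, PUODAux.trunc n (X i ω) ∂P) * (∫ ω, PUODAux.trunc n (X j ω) ∂P)) :=
      PUODAux.hoeffding_expand P (fun ω => PUODAux.trunc n (X i ω))
        (fun ω => PUODAux.trunc n (X j ω)) hAm hBm n
        (fun ω => PUODAux.abs_trunc_le n _) (fun ω => PUODAux.abs_trunc_le n _)
    -- rewrite the double integral via Fubini
    have hg : Integrable (Function.uncurry (fun (z : Ω × Ω) (st : ℝ × ℝ) =>
        (PUODAux.ind st.1 (X i z.1) - PUODAux.ind st.1 (X i z.2)) *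
        (PUODAux.ind st.2 (X j z.1) - PUODAux.ind st.2 (X j z.2))))
        ((P.prod P).prod ((volume.restrict (Ioc (-(n:ℝ)) n)).prod
          (volume.restrict (Ioc (-(n:ℝ)) n)))) := by
      have hunc : Function.uncurry (fun (z : Ω × Ω) (st : ℝ × ℝ) =>
          (PUODAux.ind st.1 (X i z.1) - PUODAux.ind st.1 (X i z.2)) *
          (PUODAux.ind st.2 (X j z.1) - PUODAux.ind st.2 (X j z.2)))
          = fun p : (Ω × Ω) × ℝ × ℝ =>
            (PUODAux.ind p.2.1 (X i p.1.1) - PUODAux.ind p.2.1 (X i p.1.2)) *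
            (PUODAux.ind p.2.2 (X j p.1.1) - PUODAux.ind p.2.2 (X j p.1.2)) := rfl
      rw [hunc]
      apply PUODAux.integrable_of_bdd (C := 1)
      · apply Measurable.mul
        · exact (PUODAux.meas_ind_comp _ _ measurable_snd.fst
            ((hX i).comp measurable_fst.fst)).sub
            (PUODAux.meas_ind_comp _ _ measurable_snd.fst ((hX i).comp measurable_fst.snd))
        · exact (PUODAux.meas_ind_comp _ _ measurable_snd.snd
            ((hX j).comp measurable_fst.fst)).sub
            (PUODAux.meas_ind_comp _ _ measurable_snd.snd ((hX j).comp measurable_fst.snd))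
      · intro p
        rw [abs_mul]
        exact mul_le_one₀ (PUODAux.abs_ind_sub_le _ _ _) (abs_nonneg _)
          (PUODAux.abs_ind_sub_le _ _ _)
    have hswap : (∫ z : Ω × Ω, (PUODAux.trunc n (X i z.1) - PUODAux.trunc n (X i z.2)) *
          (PUODAux.trunc n (X j z.1) - PUODAux.trunc n (X j z.2)) ∂(P.prod P))
        = ∫ st : ℝ × ℝ, (∫ z : Ω × Ω,
            (PUODAux.ind st.1 (X i z.1) - PUODAux.ind st.1 (X i z.2)) *
            (PUODAux.ind st.2 (X j z.1) - PUODAux.ind st.2 (X j z.2)) ∂(P.prod P))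
            ∂((volume.restrict (Ioc (-(n:ℝ)) n)).prod (volume.restrict (Ioc (-(n:ℝ)) n))) := by
      have hpt : (fun z : Ω × Ω => (PUODAux.trunc n (X i z.1) - PUODAux.trunc n (X i z.2)) *
            (PUODAux.trunc n (X j z.1) - PUODAux.trunc n (X j z.2)))
          = fun z : Ω × Ω => ∫ st : ℝ × ℝ,
              (PUODAux.ind st.1 (X i z.1) - PUODAux.ind st.1 (X i z.2)) *
              (PUODAux.ind st.2 (X j z.1) - PUODAux.ind st.2 (X j z.2))
              ∂((volume.restrict (Ioc (-(n:ℝ)) n)).prod (volume.restrict (Ioc (-(n:ℝ)) n))) := by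
        funext z
        rw [integral_prod_mul (f := fun s => PUODAux.ind s (X i z.1) - PUODAux.ind s (X i z.2))
            (g := fun t => PUODAux.ind t (X j z.1) - PUODAux.ind t (X j z.2))]
        rw [PUODAux.integral_ind_sub, PUODAux.integral_ind_sub]
      rw [hpt]
      exact integral_integral_swap hg
    have hnonneg : 0 ≤ ∫ st : ℝ × ℝ, (∫ z : Ω × Ω,
        (PUODAux.ind st.1 (X i z.1) - PUODAux.ind st.1 (X i z.2)) *
        (PUODAux.ind st.2 (X j z.1) - PUODAux.ind st.2 (X j z.2)) ∂(P.prod P))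
        ∂((volume.restrict (Ioc (-(n:ℝ)) n)).prod (volume.restrict (Ioc (-(n:ℝ)) n))) := by
      apply integral_nonneg
      intro st
      show 0 ≤ ∫ z : Ω × Ω,
        (PUODAux.ind st.1 (X i z.1) - PUODAux.ind st.1 (X i z.2)) *
        (PUODAux.ind st.2 (X j z.1) - PUODAux.ind st.2 (X j z.2)) ∂(P.prod P)
      have hK : (∫ z : Ω × Ω,
          (PUODAux.ind st.1 (X i z.1) - PUODAux.ind st.1 (X i z.2)) *
          (PUODAux.ind st.2 (X j z.1) - PUODAux.ind st.2 (X j z.2)) ∂(P.prod P))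
          = 2 * ((∫ ω, PUODAux.ind st.1 (X i ω) * PUODAux.ind st.2 (X j ω) ∂P)
            - (∫ ω, PUODAux.ind st.1 (X i ω) ∂P) * (∫ ω, PUODAux.ind st.2 (X j ω) ∂P)) :=
        PUODAux.hoeffding_expand P (fun ω => PUODAux.ind st.1 (X i ω))
          (fun ω => PUODAux.ind st.2 (X j ω))
          (PUODAux.meas_ind_comp _ _ measurable_const (hX i))
          (PUODAux.meas_ind_comp _ _ measurable_const (hX j)) 1
          (fun ω => by
            rw [abs_of_nonneg (PUODAux.ind_nonneg _ _)]; exact PUODAux.ind_le_one _ _)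
          (fun ω => by
            rw [abs_of_nonneg (PUODAux.ind_nonneg _ _)]; exact PUODAux.ind_le_one _ _)
      rw [hK, int_ind2, int_ind, int_ind]
      have := pair st.1 st.2
      linarith
    rw [hswap] at hCn
    linarith [hnonneg.trans_eq hCn]
  -- pass to the limit
  have hTF : Tendsto (fun n => ∫ ω, PUODAux.trunc n (X i ω) ∂P) atTop
      (𝓝 (∫ ω, X i ω ∂P)) := by
    apply tendsto_integral_of_dominated_convergence (fun ω => |X i ω|)
      (fun n => ((PUODAux.measurable_trunc n).comp (hX i)).aestronglyMeasurable)
      (hXint i).abs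
      (fun n => ae_of_all _ fun ω => by
        simpa [Real.norm_eq_abs] using PUODAux.abs_trunc_le_abs n (X i ω))
      (ae_of_all _ fun ω => PUODAux.tendsto_trunc (X i ω))
  have hTG : Tendsto (fun n => ∫ ω, PUODAux.trunc n (X j ω) ∂P) atTop
      (𝓝 (∫ ω, X j ω ∂P)) := by
    apply tendsto_integral_of_dominated_convergence (fun ω => |X j ω|)
      (fun n => ((PUODAux.measurable_trunc n).comp (hX j)).aestronglyMeasurable)
      (hXint j).abs
      (fun n => ae_of_all _ fun ω => by
        simpa [Real.norm_eq_abs] using PUODAux.abs_trunc_le_abs n (X j ω))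
      (ae_of_all _ fun ω => PUODAux.tendsto_trunc (X j ω))
  have hTFG : Tendsto (fun n => ∫ ω, PUODAux.trunc n (X i ω) * PUODAux.trunc n (X j ω) ∂P)
      atTop (𝓝 (∫ ω, X i ω * X j ω ∂P)) := by
    have habs : Integrable (fun ω => |X i ω| * |X j ω|) P := by
      have he : (fun ω => |X i ω| * |X j ω|) = fun ω => |X i ω * X j ω| := by
        ext ω; rw [abs_mul]
      rw [he]; exact hFGint.abs
    apply tendsto_integral_of_dominated_convergence (fun ω => |X i ω| * |X j ω|)
      (fun n => (((PUODAux.measurable_trunc n).comp (hX i)).mul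
        ((PUODAux.measurable_trunc n).comp (hX j))).aestronglyMeasurable)
      habs
      (fun n => ae_of_all _ fun ω => by
        rw [Real.norm_eq_abs, Pi.mul_apply, Function.comp_apply, Function.comp_apply, abs_mul]
        exact mul_le_mul (PUODAux.abs_trunc_le_abs n _) (PUODAux.abs_trunc_le_abs n _)
          (abs_nonneg _) (abs_nonneg _))
      (ae_of_all _ fun ω => (PUODAux.tendsto_trunc (X i ω)).mul (PUODAux.tendsto_trunc (X j ω)))
  exact ge_of_tendsto' (hTFG.sub (hTF.mul hTG)) step
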